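/- Every F_σ subspace of a space with the Hurewicz property has the Hurewicz property. -/

import Mathlib

open Set Filter

def Hurewicz (X : Type*) [TopologicalSpace X] : Prop :=
  ∀ U : ℕ → Set (Set X),
    (∀ n, (∀ u ∈ U n, IsOpen u) ∧ ⋃₀ U n = Set.univ) →
    ∃ V : ℕ → Set (Set X),
      (∀ n, V n ⊆ U n ∧ (V n).Finite) ∧
      ∀ x : X, ∀ᶠ n in atTop, x ∈ ⋃₀ V n

def Menger (X : Type*) [TopologicalSpace X] : Prop :=
  ∀ U : ℕ → Set (Set X),
    (∀ n, (∀ u ∈ U n, IsOpen u) ∧ ⋃₀ U n = Set.univ) →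
    ∃ V : ℕ → Set (Set X),
      (∀ n, V n ⊆ U n ∧ (V n).Finite) ∧
      (⋃ n, ⋃₀ V n) = Set.univ

theorem hurewicz_Fsigma_subspace (X : Type*) [TopologicalSpace X] (h : Hurewicz X)
    (S : Set X) (C : ℕ → Set X) (hC : ∀ n, IsClosed (C n)) (hS : S = ⋃ n, C n) :
    Hurewicz S := by
  classical
  intro U hU
  -- a lifting of open sets of S to open sets of X
  set t : Set ↥S → Set X := fun u =>
    if hx : ∃ v, IsOpen v ∧ u = (Subtype.val : ↥S → X) ⁻¹' v then hx.choose else ∅ with ht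
  have htOpen : ∀ n, ∀ u ∈ U n, IsOpen (t u) ∧ u = (Subtype.val : ↥S → X) ⁻¹' (t u) := by
    intro n u hu
    have hopen := (hU n).1 u hu
    rw [isOpen_induced_iff] at hopen
    obtain ⟨v, hv, hveq⟩ := hopen
    have hex : ∃ v, IsOpen v ∧ u = (Subtype.val : ↥S → X) ⁻¹' v := ⟨v, hv, hveq.symm⟩
    simp only [ht, dif_pos hex]
    exact ⟨hex.choose_spec.1, hex.choose_spec.2⟩
  -- the augmented covers of X
  have hW : ∀ k n, (∀ w ∈ insert (C k)ᶜ (t '' U n), IsOpen w) ∧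
      ⋃₀ insert (C k)ᶜ (t '' U n) = Set.univ := by
    intro k n
    constructor
    · rintro w hw
      rcases hw with rfl | ⟨u, hu, rfl⟩
      · exact (hC k).isOpen_compl
      · exact (htOpen n u hu).1
    · ext x
      simp only [mem_sUnion, mem_univ, iff_true]
      by_cases hx : x ∈ C k
      · have hxS : x ∈ S := hS ▸ mem_iUnion.mpr ⟨k, hx⟩
        have hxU : (⟨x, hxS⟩ : ↥S) ∈ ⋃₀ U n := (hU n).2 ▸ mem_univ _
        obtain ⟨u, hu, hxu⟩ := hxU
        refine ⟨t u, Or.inr ⟨u, hu, rfl⟩, ?_⟩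
        have heq := (htOpen n u hu).2
        rw [heq] at hxu
        exact hxu
      · exact ⟨(C k)ᶜ, Or.inl rfl, hx⟩
  choose V' hV'sub hV'cov using fun k => h _ (hW k)
  -- picking preimages
  set pick : ℕ → Set X → Set ↥S := fun n w =>
    if hx : ∃ u ∈ U n, t u = w then hx.choose else ∅ with hpick
  have hpickSpec : ∀ n w, (∃ u ∈ U n, t u = w) → pick n w ∈ U n ∧ t (pick n w) = w := by
    intro n w hx
    simp only [hpick, dif_pos hx]
    exact ⟨hx.choose_spec.1, hx.choose_spec.2⟩
  have himg : ∀ k n w, w ∈ V' k n → w ≠ (C k)ᶜ → ∃ u ∈ U n, t u = w := by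
    intro k n w hw hne
    rcases (hV'sub k n).1 hw with rfl | ⟨u, hu, rfl⟩
    · exact absurd rfl hne
    · exact ⟨u, hu, rfl⟩
  refine ⟨fun n => ⋃ k ∈ Finset.range (n + 1), pick n '' (V' k n \ {(C k)ᶜ}), ?_, ?_⟩
  · intro n
    constructor
    · intro u hu
      simp only [mem_iUnion] at hu
      obtain ⟨k, -, w, hw, rfl⟩ := hu
      exact (hpickSpec n w (himg k n w hw.1 hw.2)).1
    · apply Set.Finite.biUnion (Finset.range (n + 1)).finite_toSet
      intro k _
      exact (((hV'sub k n).2).diff (t := {(C k)ᶜ})).image _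
  · intro x
    have hxS : (x : X) ∈ ⋃ n, C n := hS ▸ x.2
    obtain ⟨k, hk⟩ := mem_iUnion.mp hxS
    filter_upwards [hV'cov k (x : X), eventually_ge_atTop k] with n hn hkn
    obtain ⟨w, hw, hxw⟩ := hn
    have hne : w ≠ (C k)ᶜ := fun hwe => (hwe ▸ hxw) hk
    obtain ⟨u, hu, htu⟩ := himg k n w hw hne
    have hps := hpickSpec n w ⟨u, hu, htu⟩
    refine ⟨pick n w, ?_, ?_⟩
    · simp only [mem_iUnion]
      exact ⟨k, Finset.mem_range.mpr (Nat.lt_succ_of_le hkn), w, ⟨hw, hne⟩, rfl⟩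
    · have heq := (htOpen n (pick n w) hps.1).2
      rw [heq, hps.2]
      exact hxw
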